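/- Let a, b, d, D₁, D₂ be positive integers with gcd(D₁D₂, ab) = 1, and define the normalized 6-fold Fourier transform Ŝ_{a,b,d}(x₁,…,z₂; D₁, D₂) of the GL(3) long-element Kloosterman sum as in the paper. If D₁ = t₁u₁ and D₂ = t₂u₂ with gcd(t₁t₂, u₁u₂) = 1, then Ŝ_{a,b,d}(x₁,x₂,y₁,y₂,z₁,z₂; t₁u₁, t₂u₂) = Ŝ_{a,b,d}(t̄₁x₁, t₂t̄₁x₂, t₁t̄₂y₁, t̄₂y₂, t̄₁z₁, t̄₂z₂; u₁, u₂) · Ŝ_{a,b,d}(ū₁x₁, u₂ū₁x₂, u₁ū₂y₁, ū₂y₂, ū₁z₁, ū₂z₂; t₁, t₂), where bars denote inverses modulo the complementary factors. -/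

import Mathlib

/-- e(t) = exp(2πit) -/
noncomputable def e2pi (t : ℝ) : ℂ := Complex.exp (2 * Real.pi * Complex.I * t)

/-- The normalized 6-fold Fourier transform Ŝ_{a,b,d} of a (level-1) GL(3)
long-element Kloosterman sum S. -/
noncomputable def Shat (S : ℤ → ℤ → ℤ → ℤ → ℕ → ℕ → ℂ) (a b d : ℤ)
    (x₁ x₂ y₁ y₂ z₁ z₂ : ℤ) (D₁ D₂ : ℕ) : ℂ :=
  (1 / ((D₁ : ℂ) ^ 3 * (D₂ : ℂ) ^ 3)) *
    ∑ n₁ ∈ Finset.range D₁, ∑ m₁ ∈ Finset.range D₁, ∑ l₁ ∈ Finset.range D₁,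
      ∑ n₂ ∈ Finset.range D₂, ∑ m₂ ∈ Finset.range D₂, ∑ l₂ ∈ Finset.range D₂,
        S (a * m₁ * d) (b * n₂ * l₂) ((n₁ : ℤ) * l₁) ((m₂ : ℤ) * d) D₁ D₂ *
          e2pi ((-(((n₁ : ℤ) * x₁ + (m₁ : ℤ) * y₁ + (l₁ : ℤ) * z₁) : ℤ) : ℝ) / (D₁ : ℝ)) *
          e2pi ((-(((n₂ : ℤ) * x₂ + (m₂ : ℤ) * y₂ + (l₂ : ℤ) * z₂) : ℤ) : ℝ) / (D₂ : ℝ))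

open Finset

noncomputable def eZ (D : ℕ) (m : ℤ) : ℂ := e2pi (-(m : ℝ) / (D : ℝ))

lemma e2pi_add (s t : ℝ) : e2pi (s + t) = e2pi s * e2pi t := by
  rw [e2pi, e2pi, e2pi, ← Complex.exp_add]; congr 1; push_cast; ring

lemma e2pi_int (k : ℤ) : e2pi (k : ℝ) = 1 := by
  have h := Complex.exp_int_mul_two_pi_mul_I k
  rw [e2pi, ← h]; congr 1; push_cast; ring

lemma eZ_congr {D : ℕ} {m m' : ℤ} (h : m ≡ m' [ZMOD (D:ℤ)]) : eZ D m = eZ D m' := by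
  rcases eq_or_ne D 0 with hD | hD
  · subst hD
    have : m = m' := by simpa [Int.ModEq] using h
    rw [this]
  · obtain ⟨k, hk⟩ := Int.modEq_iff_dvd.mp h
    have hD' : (D:ℝ) ≠ 0 := by exact_mod_cast hD
    have h2 : (m' : ℝ) = m + D * k := by
      have : (m' : ℝ) - m = D * k := by exact_mod_cast congrArg (Int.cast : ℤ → ℝ) hk
      linarith
    have harg : (-(m' : ℝ))/(D:ℝ) = (-(m:ℝ))/(D:ℝ) + ((-k : ℤ) : ℝ) := by
      rw [h2]; push_cast; field_simp; ring
    rw [eZ, eZ, harg, e2pi_add, e2pi_int, mul_one]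

lemma eZ_split (t u : ℕ) (ht : t ≠ 0) (hu : u ≠ 0) (a b : ℤ) :
    eZ (t*u) ((u:ℤ)*a + (t:ℤ)*b) = eZ t a * eZ u b := by
  rw [eZ, eZ, eZ, ← e2pi_add]; congr 1
  have ht' : (t:ℝ) ≠ 0 := by exact_mod_cast ht
  have hu' : (u:ℝ) ≠ 0 := by exact_mod_cast hu
  push_cast; field_simp; ring

lemma sum_range_zmod (t : ℕ) [NeZero t] (g : ℕ → ℂ) :
    ∑ n ∈ range t, g n = ∑ x : ZMod t, g x.val := by
  refine Finset.sum_nbij' (fun n => (n : ZMod t)) (fun x => x.val) ?_ ?_ ?_ ?_ ?_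
  · intro n _; exact Finset.mem_univ _
  · intro x _; exact Finset.mem_range.mpr (ZMod.val_lt x)
  · intro n hn; exact ZMod.val_cast_of_lt (Finset.mem_range.mp hn)
  · intro x _; exact ZMod.natCast_rightInverse x
  · intro n hn; rw [ZMod.val_cast_of_lt (Finset.mem_range.mp hn)]

lemma reindex_sum (t : ℕ) (ht : 0 < t) (c : ℤ) (hc : IsUnit (c : ZMod t))
    (f : ℤ → ℂ) (hf : ∀ m m' : ℤ, m ≡ m' [ZMOD (t:ℤ)] → f m = f m') :
    ∑ n ∈ range t, f (n : ℤ) = ∑ n ∈ range t, f (c * (n : ℤ)) := by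
  haveI : NeZero t := ⟨ht.ne'⟩
  rw [sum_range_zmod t (fun n => f (n:ℤ)), sum_range_zmod t (fun n => f (c * (n:ℤ)))]
  have hbij : Function.Bijective (fun x : ZMod t => (c : ZMod t) * x) :=
    IsUnit.isUnit_iff_mulLeft_bijective.mp hc
  refine (Fintype.sum_bijective _ hbij (fun x => f (c * (x.val : ℤ))) (fun x => f ((x.val : ℕ) : ℤ)) ?_).symm
  intro x
  apply hf
  rw [← ZMod.intCast_eq_intCast_iff]
  push_cast [ZMod.natCast_val, ZMod.cast_id]
  rfl

lemma crt_split (t u : ℕ) (ht : 0 < t) (hu : 0 < u) (hcop : Nat.Coprime t u)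
    (f : ℤ → ℂ) (hf : ∀ m m' : ℤ, m ≡ m' [ZMOD ((t*u : ℕ):ℤ)] → f m = f m') :
    ∑ n ∈ range (t*u), f (n : ℤ) =
      ∑ p ∈ range t, ∑ P ∈ range u, f ((u:ℤ) * (p:ℤ) + (t:ℤ) * (P:ℤ)) := by
  haveI : NeZero t := ⟨ht.ne'⟩
  haveI : NeZero u := ⟨hu.ne'⟩
  haveI : NeZero (t*u) := ⟨(Nat.mul_pos ht hu).ne'⟩
  rw [sum_range_zmod (t*u) (fun n => f (n:ℤ))]
  rw [sum_range_zmod t (fun p => ∑ P ∈ range u, f ((u:ℤ) * (p:ℤ) + (t:ℤ) * (P:ℤ)))]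
  have hinner : ∀ x : ZMod t,
      ∑ P ∈ range u, f ((u:ℤ) * ((x.val : ℕ):ℤ) + (t:ℤ) * (P:ℤ)) =
      ∑ y : ZMod u, f ((u:ℤ) * ((x.val : ℕ):ℤ) + (t:ℤ) * ((y.val : ℕ):ℤ)) := by
    intro x
    exact sum_range_zmod u (fun P => f ((u:ℤ) * ((x.val : ℕ):ℤ) + (t:ℤ) * (P:ℤ)))
  simp only [hinner]
  rw [← Fintype.sum_prod_type']
  set φ : ZMod t × ZMod u → ZMod (t*u) :=
    fun z => (((u:ℤ) * ((z.1.val : ℕ):ℤ) + (t:ℤ) * ((z.2.val : ℕ):ℤ) : ℤ) : ZMod (t*u)) with hφ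
  have hut : IsUnit ((u : ℕ) : ZMod t) := (ZMod.isUnit_iff_coprime u t).mpr hcop.symm
  have htu : IsUnit ((t : ℕ) : ZMod u) := (ZMod.isUnit_iff_coprime t u).mpr hcop
  have hinj : Function.Injective φ := by
    intro z w h
    have h1 := congrArg (ZMod.castHom (dvd_mul_right t u) (ZMod t)) h
    have h2 := congrArg (ZMod.castHom (dvd_mul_left u t) (ZMod u)) h
    simp only [hφ, map_intCast] at h1 h2
    push_cast [ZMod.natCast_self, ZMod.natCast_val, ZMod.cast_id] at h1 h2
    have e1 : z.1 = w.1 := hut.mul_right_injective (by simpa using h1)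
    have e2 : z.2 = w.2 := htu.mul_right_injective (by simpa using h2)
    exact Prod.ext e1 e2
  have hbij : Function.Bijective φ := by
    rw [Fintype.bijective_iff_injective_and_card]
    exact ⟨hinj, by simp [ZMod.card, Fintype.card_prod]⟩
  refine (Fintype.sum_bijective φ hbij _ (fun x => f ((x.val : ℕ):ℤ)) ?_).symm
  intro z
  apply hf
  rw [← ZMod.intCast_eq_intCast_iff, Int.cast_natCast]
  exact (ZMod.natCast_rightInverse _).symm

section Six

def Per6 (D₁ D₂ : ℕ) (F : ℤ → ℤ → ℤ → ℤ → ℤ → ℤ → ℂ) : Prop :=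
  ∀ a₁ b₁ e₁ a₂ b₂ e₂ a₁' b₁' e₁' a₂' b₂' e₂' : ℤ,
    a₁ ≡ a₁' [ZMOD (D₁:ℤ)] → b₁ ≡ b₁' [ZMOD (D₁:ℤ)] → e₁ ≡ e₁' [ZMOD (D₁:ℤ)] →
    a₂ ≡ a₂' [ZMOD (D₂:ℤ)] → b₂ ≡ b₂' [ZMOD (D₂:ℤ)] → e₂ ≡ e₂' [ZMOD (D₂:ℤ)] →
    F a₁ b₁ e₁ a₂ b₂ e₂ = F a₁' b₁' e₁' a₂' b₂' e₂'

lemma six_reindex (D₁ D₂ : ℕ) (h₁ : 0 < D₁) (h₂ : 0 < D₂) (c₁ c₂ c₃ c₄ c₅ c₆ : ℤ)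
    (hc₁ : IsUnit ((c₁ : ZMod D₁))) (hc₂ : IsUnit ((c₂ : ZMod D₁)))
    (hc₃ : IsUnit ((c₃ : ZMod D₁))) (hc₄ : IsUnit ((c₄ : ZMod D₂)))
    (hc₅ : IsUnit ((c₅ : ZMod D₂))) (hc₆ : IsUnit ((c₆ : ZMod D₂)))
    (F : ℤ → ℤ → ℤ → ℤ → ℤ → ℤ → ℂ) (hF : Per6 D₁ D₂ F) :
    (∑ n₁ ∈ range D₁, ∑ m₁ ∈ range D₁, ∑ l₁ ∈ range D₁,
      ∑ n₂ ∈ range D₂, ∑ m₂ ∈ range D₂, ∑ l₂ ∈ range D₂,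
        F (n₁:ℤ) (m₁:ℤ) (l₁:ℤ) (n₂:ℤ) (m₂:ℤ) (l₂:ℤ))
    = ∑ n₁ ∈ range D₁, ∑ m₁ ∈ range D₁, ∑ l₁ ∈ range D₁,
      ∑ n₂ ∈ range D₂, ∑ m₂ ∈ range D₂, ∑ l₂ ∈ range D₂,
        F (c₁*(n₁:ℤ)) (c₂*(m₁:ℤ)) (c₃*(l₁:ℤ)) (c₄*(n₂:ℤ)) (c₅*(m₂:ℤ)) (c₆*(l₂:ℤ)) := by
  refine Eq.trans (reindex_sum D₁ h₁ c₁ hc₁ (fun v : ℤ => ∑ m₁ ∈ range D₁, ∑ l₁ ∈ range D₁, ∑ n₂ ∈ range D₂, ∑ m₂ ∈ range D₂, ∑ l₂ ∈ range D₂, F v (m₁:ℤ) (l₁:ℤ) (n₂:ℤ) (m₂:ℤ) (l₂:ℤ))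
    (fun m m' h => by
    refine Finset.sum_congr rfl fun m₁ _ => Finset.sum_congr rfl fun l₁ _ => Finset.sum_congr rfl fun n₂ _ => Finset.sum_congr rfl fun m₂ _ => Finset.sum_congr rfl fun l₂ _ => ?_
    exact hF _ _ _ _ _ _ _ _ _ _ _ _ h .rfl .rfl .rfl .rfl .rfl)) ?_
  refine Finset.sum_congr rfl fun n₁ _ => ?_
  refine Eq.trans (reindex_sum D₁ h₁ c₂ hc₂ (fun v : ℤ => ∑ l₁ ∈ range D₁, ∑ n₂ ∈ range D₂, ∑ m₂ ∈ range D₂, ∑ l₂ ∈ range D₂, F (c₁*(n₁:ℤ)) v (l₁:ℤ) (n₂:ℤ) (m₂:ℤ) (l₂:ℤ))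
    (fun m m' h => by
    refine Finset.sum_congr rfl fun l₁ _ => Finset.sum_congr rfl fun n₂ _ => Finset.sum_congr rfl fun m₂ _ => Finset.sum_congr rfl fun l₂ _ => ?_
    exact hF _ _ _ _ _ _ _ _ _ _ _ _ .rfl h .rfl .rfl .rfl .rfl)) ?_
  refine Finset.sum_congr rfl fun m₁ _ => ?_
  refine Eq.trans (reindex_sum D₁ h₁ c₃ hc₃ (fun v : ℤ => ∑ n₂ ∈ range D₂, ∑ m₂ ∈ range D₂, ∑ l₂ ∈ range D₂, F (c₁*(n₁:ℤ)) (c₂*(m₁:ℤ)) v (n₂:ℤ) (m₂:ℤ) (l₂:ℤ))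
    (fun m m' h => by
    refine Finset.sum_congr rfl fun n₂ _ => Finset.sum_congr rfl fun m₂ _ => Finset.sum_congr rfl fun l₂ _ => ?_
    exact hF _ _ _ _ _ _ _ _ _ _ _ _ .rfl .rfl h .rfl .rfl .rfl)) ?_
  refine Finset.sum_congr rfl fun l₁ _ => ?_
  refine Eq.trans (reindex_sum D₂ h₂ c₄ hc₄ (fun v : ℤ => ∑ m₂ ∈ range D₂, ∑ l₂ ∈ range D₂, F (c₁*(n₁:ℤ)) (c₂*(m₁:ℤ)) (c₃*(l₁:ℤ)) v (m₂:ℤ) (l₂:ℤ))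
    (fun m m' h => by
    refine Finset.sum_congr rfl fun m₂ _ => Finset.sum_congr rfl fun l₂ _ => ?_
    exact hF _ _ _ _ _ _ _ _ _ _ _ _ .rfl .rfl .rfl h .rfl .rfl)) ?_
  refine Finset.sum_congr rfl fun n₂ _ => ?_
  refine Eq.trans (reindex_sum D₂ h₂ c₅ hc₅ (fun v : ℤ => ∑ l₂ ∈ range D₂, F (c₁*(n₁:ℤ)) (c₂*(m₁:ℤ)) (c₃*(l₁:ℤ)) (c₄*(n₂:ℤ)) v (l₂:ℤ))
    (fun m m' h => by
    refine Finset.sum_congr rfl fun l₂ _ => ?_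
    exact hF _ _ _ _ _ _ _ _ _ _ _ _ .rfl .rfl .rfl .rfl h .rfl)) ?_
  refine Finset.sum_congr rfl fun m₂ _ => ?_
  refine Eq.trans (reindex_sum D₂ h₂ c₆ hc₆ (fun v : ℤ => F (c₁*(n₁:ℤ)) (c₂*(m₁:ℤ)) (c₃*(l₁:ℤ)) (c₄*(n₂:ℤ)) (c₅*(m₂:ℤ)) v)
    (fun m m' h => hF _ _ _ _ _ _ _ _ _ _ _ _ .rfl .rfl .rfl .rfl .rfl h)) ?_
  rfl


lemma six_split (t₁ u₁ t₂ u₂ : ℕ) (ht₁ : 0 < t₁) (hu₁ : 0 < u₁) (ht₂ : 0 < t₂) (hu₂ : 0 < u₂)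
    (cop₁ : Nat.Coprime t₁ u₁) (cop₂ : Nat.Coprime t₂ u₂)
    (F : ℤ → ℤ → ℤ → ℤ → ℤ → ℤ → ℂ) (hF : Per6 (t₁*u₁) (t₂*u₂) F) :
    (∑ n₁ ∈ range (t₁*u₁), ∑ m₁ ∈ range (t₁*u₁), ∑ l₁ ∈ range (t₁*u₁),
      ∑ n₂ ∈ range (t₂*u₂), ∑ m₂ ∈ range (t₂*u₂), ∑ l₂ ∈ range (t₂*u₂),
        F (n₁:ℤ) (m₁:ℤ) (l₁:ℤ) (n₂:ℤ) (m₂:ℤ) (l₂:ℤ))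
    = ∑ pn ∈ range t₁, ∑ Pn ∈ range u₁, ∑ pm ∈ range t₁, ∑ Pm ∈ range u₁,
      ∑ pl ∈ range t₁, ∑ Pl ∈ range u₁,
      ∑ qn ∈ range t₂, ∑ Qn ∈ range u₂, ∑ qm ∈ range t₂, ∑ Qm ∈ range u₂,
      ∑ ql ∈ range t₂, ∑ Ql ∈ range u₂,
        F ((u₁:ℤ)*(pn:ℤ) + (t₁:ℤ)*(Pn:ℤ)) ((u₁:ℤ)*(pm:ℤ) + (t₁:ℤ)*(Pm:ℤ)) ((u₁:ℤ)*(pl:ℤ) + (t₁:ℤ)*(Pl:ℤ))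
          ((u₂:ℤ)*(qn:ℤ) + (t₂:ℤ)*(Qn:ℤ)) ((u₂:ℤ)*(qm:ℤ) + (t₂:ℤ)*(Qm:ℤ)) ((u₂:ℤ)*(ql:ℤ) + (t₂:ℤ)*(Ql:ℤ)) := by
  refine Eq.trans (crt_split t₁ u₁ ht₁ hu₁ cop₁ (fun v : ℤ => ∑ m₁ ∈ range (t₁*u₁), ∑ l₁ ∈ range (t₁*u₁), ∑ n₂ ∈ range (t₂*u₂), ∑ m₂ ∈ range (t₂*u₂), ∑ l₂ ∈ range (t₂*u₂), F v (m₁:ℤ) (l₁:ℤ) (n₂:ℤ) (m₂:ℤ) (l₂:ℤ))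
    (fun m m' h => by
    refine Finset.sum_congr rfl fun m₁ _ => Finset.sum_congr rfl fun l₁ _ => Finset.sum_congr rfl fun n₂ _ => Finset.sum_congr rfl fun m₂ _ => Finset.sum_congr rfl fun l₂ _ => ?_
    exact hF _ _ _ _ _ _ _ _ _ _ _ _ h .rfl .rfl .rfl .rfl .rfl)) ?_
  refine Finset.sum_congr rfl fun pn _ => Finset.sum_congr rfl fun Pn _ => ?_
  refine Eq.trans (crt_split t₁ u₁ ht₁ hu₁ cop₁ (fun v : ℤ => ∑ l₁ ∈ range (t₁*u₁), ∑ n₂ ∈ range (t₂*u₂), ∑ m₂ ∈ range (t₂*u₂), ∑ l₂ ∈ range (t₂*u₂), F ((u₁:ℤ)*(pn:ℤ) + (t₁:ℤ)*(Pn:ℤ)) v (l₁:ℤ) (n₂:ℤ) (m₂:ℤ) (l₂:ℤ))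
    (fun m m' h => by
    refine Finset.sum_congr rfl fun l₁ _ => Finset.sum_congr rfl fun n₂ _ => Finset.sum_congr rfl fun m₂ _ => Finset.sum_congr rfl fun l₂ _ => ?_
    exact hF _ _ _ _ _ _ _ _ _ _ _ _ .rfl h .rfl .rfl .rfl .rfl)) ?_
  refine Finset.sum_congr rfl fun pm _ => Finset.sum_congr rfl fun Pm _ => ?_
  refine Eq.trans (crt_split t₁ u₁ ht₁ hu₁ cop₁ (fun v : ℤ => ∑ n₂ ∈ range (t₂*u₂), ∑ m₂ ∈ range (t₂*u₂), ∑ l₂ ∈ range (t₂*u₂), F ((u₁:ℤ)*(pn:ℤ) + (t₁:ℤ)*(Pn:ℤ)) ((u₁:ℤ)*(pm:ℤ) + (t₁:ℤ)*(Pm:ℤ)) v (n₂:ℤ) (m₂:ℤ) (l₂:ℤ))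
    (fun m m' h => by
    refine Finset.sum_congr rfl fun n₂ _ => Finset.sum_congr rfl fun m₂ _ => Finset.sum_congr rfl fun l₂ _ => ?_
    exact hF _ _ _ _ _ _ _ _ _ _ _ _ .rfl .rfl h .rfl .rfl .rfl)) ?_
  refine Finset.sum_congr rfl fun pl _ => Finset.sum_congr rfl fun Pl _ => ?_
  refine Eq.trans (crt_split t₂ u₂ ht₂ hu₂ cop₂ (fun v : ℤ => ∑ m₂ ∈ range (t₂*u₂), ∑ l₂ ∈ range (t₂*u₂), F ((u₁:ℤ)*(pn:ℤ) + (t₁:ℤ)*(Pn:ℤ)) ((u₁:ℤ)*(pm:ℤ) + (t₁:ℤ)*(Pm:ℤ)) ((u₁:ℤ)*(pl:ℤ) + (t₁:ℤ)*(Pl:ℤ)) v (m₂:ℤ) (l₂:ℤ))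
    (fun m m' h => by
    refine Finset.sum_congr rfl fun m₂ _ => Finset.sum_congr rfl fun l₂ _ => ?_
    exact hF _ _ _ _ _ _ _ _ _ _ _ _ .rfl .rfl .rfl h .rfl .rfl)) ?_
  refine Finset.sum_congr rfl fun qn _ => Finset.sum_congr rfl fun Qn _ => ?_
  refine Eq.trans (crt_split t₂ u₂ ht₂ hu₂ cop₂ (fun v : ℤ => ∑ l₂ ∈ range (t₂*u₂), F ((u₁:ℤ)*(pn:ℤ) + (t₁:ℤ)*(Pn:ℤ)) ((u₁:ℤ)*(pm:ℤ) + (t₁:ℤ)*(Pm:ℤ)) ((u₁:ℤ)*(pl:ℤ) + (t₁:ℤ)*(Pl:ℤ)) ((u₂:ℤ)*(qn:ℤ) + (t₂:ℤ)*(Qn:ℤ)) v (l₂:ℤ))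
    (fun m m' h => by
    refine Finset.sum_congr rfl fun l₂ _ => ?_
    exact hF _ _ _ _ _ _ _ _ _ _ _ _ .rfl .rfl .rfl .rfl h .rfl)) ?_
  refine Finset.sum_congr rfl fun qm _ => Finset.sum_congr rfl fun Qm _ => ?_
  refine Eq.trans (crt_split t₂ u₂ ht₂ hu₂ cop₂ (fun v : ℤ => F ((u₁:ℤ)*(pn:ℤ) + (t₁:ℤ)*(Pn:ℤ)) ((u₁:ℤ)*(pm:ℤ) + (t₁:ℤ)*(Pm:ℤ)) ((u₁:ℤ)*(pl:ℤ) + (t₁:ℤ)*(Pl:ℤ)) ((u₂:ℤ)*(qn:ℤ) + (t₂:ℤ)*(Qn:ℤ)) ((u₂:ℤ)*(qm:ℤ) + (t₂:ℤ)*(Qm:ℤ)) v)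
    (fun m m' h => hF _ _ _ _ _ _ _ _ _ _ _ _ .rfl .rfl .rfl .rfl .rfl h)) ?_
  rfl

end Six

lemma interleave (s₁ r₁ s₂ r₂ s₃ r₃ s₄ r₄ s₅ r₅ s₆ r₆ : Finset ℕ)
    (A B : ℕ → ℕ → ℕ → ℕ → ℕ → ℕ → ℂ) :
    (∑ a ∈ s₁, ∑ a' ∈ r₁, ∑ b ∈ s₂, ∑ b' ∈ r₂, ∑ c ∈ s₃, ∑ c' ∈ r₃,
     ∑ e ∈ s₄, ∑ e' ∈ r₄, ∑ f ∈ s₅, ∑ f' ∈ r₅, ∑ g ∈ s₆, ∑ g' ∈ r₆,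
       A a b c e f g * B a' b' c' e' f' g')
    = (∑ a ∈ s₁, ∑ b ∈ s₂, ∑ c ∈ s₃, ∑ e ∈ s₄, ∑ f ∈ s₅, ∑ g ∈ s₆, A a b c e f g)
      * (∑ a' ∈ r₁, ∑ b' ∈ r₂, ∑ c' ∈ r₃, ∑ e' ∈ r₄, ∑ f' ∈ r₅, ∑ g' ∈ r₆, B a' b' c' e' f' g') := by
  simp only [← Finset.sum_mul, ← Finset.mul_sum]

lemma per6_summand (S : ℤ → ℤ → ℤ → ℤ → ℕ → ℕ → ℂ)
    (hper : ∀ (m₁ m₁' m₂ m₂' n₁ n₁' n₂ n₂' : ℤ) (D₁ D₂ : ℕ),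
      m₁ ≡ m₁' [ZMOD (D₁ : ℤ)] → n₁ ≡ n₁' [ZMOD (D₁ : ℤ)] →
      m₂ ≡ m₂' [ZMOD (D₂ : ℤ)] → n₂ ≡ n₂' [ZMOD (D₂ : ℤ)] →
      S m₁ m₂ n₁ n₂ D₁ D₂ = S m₁' m₂' n₁' n₂' D₁ D₂)
    (a b d X₁ Y₁ Z₁ X₂ Y₂ Z₂ : ℤ) (D₁ D₂ : ℕ) :
    Per6 D₁ D₂ (fun n₁ m₁ l₁ n₂ m₂ l₂ =>
      S (a*m₁*d) (b*n₂*l₂) (n₁*l₁) (m₂*d) D₁ D₂ *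
        eZ D₁ (n₁*X₁+m₁*Y₁+l₁*Z₁) * eZ D₂ (n₂*X₂+m₂*Y₂+l₂*Z₂)) := by
  intro a₁ b₁ e₁ a₂ b₂ e₂ a₁' b₁' e₁' a₂' b₂' e₂' h1 h2 h3 h4 h5 h6
  dsimp only
  rw [hper (a*b₁*d) (a*b₁'*d) (b*a₂*e₂) (b*a₂'*e₂') (a₁*e₁) (a₁'*e₁') (b₂*d) (b₂'*d) D₁ D₂
      ((h2.mul_left a).mul_right d) (h1.mul h3) ((h4.mul_left b).mul h6) (h5.mul_right d),
    eZ_congr (((h1.mul_right X₁).add (h2.mul_right Y₁)).add (h3.mul_right Z₁)),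
    eZ_congr (((h4.mul_right X₂).add (h5.mul_right Y₂)).add (h6.mul_right Z₂))]

set_option maxHeartbeats 1600000 in
/-- twisted multiplicativity of the transform Ŝ_{a,b,d}: if S is
periodic in its arguments (mod the respective moduli) and satisfies the twisted
multiplicativity of GL(3) long-element Kloosterman sums, then Ŝ factors along a
coprime factorization D₁ = t₁u₁, D₂ = t₂u₂, with arguments twisted by modular
inverses. -/
theorem stmt_15 (S : ℤ → ℤ → ℤ → ℤ → ℕ → ℕ → ℂ)
    (hper : ∀ (m₁ m₁' m₂ m₂' n₁ n₁' n₂ n₂' : ℤ) (D₁ D₂ : ℕ),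
      m₁ ≡ m₁' [ZMOD (D₁ : ℤ)] → n₁ ≡ n₁' [ZMOD (D₁ : ℤ)] →
      m₂ ≡ m₂' [ZMOD (D₂ : ℤ)] → n₂ ≡ n₂' [ZMOD (D₂ : ℤ)] →
      S m₁ m₂ n₁ n₂ D₁ D₂ = S m₁' m₂' n₁' n₂' D₁ D₂)
    (hmult : ∀ (m₁ m₂ n₁ n₂ : ℤ) (t₁ t₂ u₁ u₂ : ℕ) (tb₁ tb₂ ub₁ ub₂ : ℤ),
      Nat.Coprime (t₁ * t₂) (u₁ * u₂) →
      (t₁ : ℤ) * tb₁ ≡ 1 [ZMOD ((u₁ * u₂ : ℕ) : ℤ)] →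
      (t₂ : ℤ) * tb₂ ≡ 1 [ZMOD ((u₁ * u₂ : ℕ) : ℤ)] →
      (u₁ : ℤ) * ub₁ ≡ 1 [ZMOD ((t₁ * t₂ : ℕ) : ℤ)] →
      (u₂ : ℤ) * ub₂ ≡ 1 [ZMOD ((t₁ * t₂ : ℕ) : ℤ)] →
      S m₁ m₂ n₁ n₂ (t₁ * u₁) (t₂ * u₂) =
        S (ub₁ ^ 2 * u₂ * m₁) (ub₂ ^ 2 * u₁ * m₂) n₁ n₂ t₁ t₂ *
          S (tb₁ ^ 2 * t₂ * m₁) (tb₂ ^ 2 * t₁ * m₂) n₁ n₂ u₁ u₂)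
    (a b d : ℤ) (ha : 0 < a) (hb : 0 < b) (hd : 0 < d)
    (t₁ t₂ u₁ u₂ : ℕ) (ht₁ : 0 < t₁) (ht₂ : 0 < t₂) (hu₁ : 0 < u₁) (hu₂ : 0 < u₂)
    (hcop : Nat.Coprime (t₁ * t₂) (u₁ * u₂))
    (hab : Int.gcd (((t₁ * u₁) * (t₂ * u₂) : ℕ) : ℤ) (a * b) = 1)
    (x₁ x₂ y₁ y₂ z₁ z₂ : ℤ) (tb₁ tb₂ ub₁ ub₂ : ℤ)
    (htb₁ : (t₁ : ℤ) * tb₁ ≡ 1 [ZMOD ((u₁ * u₂ : ℕ) : ℤ)])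
    (htb₂ : (t₂ : ℤ) * tb₂ ≡ 1 [ZMOD ((u₁ * u₂ : ℕ) : ℤ)])
    (hub₁ : (u₁ : ℤ) * ub₁ ≡ 1 [ZMOD ((t₁ * t₂ : ℕ) : ℤ)])
    (hub₂ : (u₂ : ℤ) * ub₂ ≡ 1 [ZMOD ((t₁ * t₂ : ℕ) : ℤ)]) :
    Shat S a b d x₁ x₂ y₁ y₂ z₁ z₂ (t₁ * u₁) (t₂ * u₂) =
      Shat S a b d (tb₁ * x₁) (t₂ * tb₁ * x₂) (t₁ * tb₂ * y₁) (tb₂ * y₂)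
          (tb₁ * z₁) (tb₂ * z₂) u₁ u₂ *
        Shat S a b d (ub₁ * x₁) (u₂ * ub₁ * x₂) (u₁ * ub₂ * y₁) (ub₂ * y₂)
          (ub₁ * z₁) (ub₂ * z₂) t₁ t₂ := by
  clear ha hb hd hab
  have hd1 : ((t₁:ℕ):ℤ) ∣ (((t₁*t₂ : ℕ)):ℤ) := Int.natCast_dvd_natCast.mpr (dvd_mul_right t₁ t₂)
  have hd2 : ((t₂:ℕ):ℤ) ∣ (((t₁*t₂ : ℕ)):ℤ) := Int.natCast_dvd_natCast.mpr (dvd_mul_left t₂ t₁)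
  have hd3 : ((u₁:ℕ):ℤ) ∣ (((u₁*u₂ : ℕ)):ℤ) := Int.natCast_dvd_natCast.mpr (dvd_mul_right u₁ u₂)
  have hd4 : ((u₂:ℕ):ℤ) ∣ (((u₁*u₂ : ℕ)):ℤ) := Int.natCast_dvd_natCast.mpr (dvd_mul_left u₂ u₁)
  have A1 : (u₁ : ZMod t₁) * (ub₁ : ZMod t₁) = 1 := by
    have h := (ZMod.intCast_eq_intCast_iff _ _ t₁).mpr (Int.ModEq.of_dvd hd1 hub₁)
    push_cast at h; exact h
  have A2 : (u₂ : ZMod t₁) * (ub₂ : ZMod t₁) = 1 := by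
    have h := (ZMod.intCast_eq_intCast_iff _ _ t₁).mpr (Int.ModEq.of_dvd hd1 hub₂)
    push_cast at h; exact h
  have B1 : (u₁ : ZMod t₂) * (ub₁ : ZMod t₂) = 1 := by
    have h := (ZMod.intCast_eq_intCast_iff _ _ t₂).mpr (Int.ModEq.of_dvd hd2 hub₁)
    push_cast at h; exact h
  have B2 : (u₂ : ZMod t₂) * (ub₂ : ZMod t₂) = 1 := by
    have h := (ZMod.intCast_eq_intCast_iff _ _ t₂).mpr (Int.ModEq.of_dvd hd2 hub₂)
    push_cast at h; exact h
  have C1 : (t₁ : ZMod u₁) * (tb₁ : ZMod u₁) = 1 := by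
    have h := (ZMod.intCast_eq_intCast_iff _ _ u₁).mpr (Int.ModEq.of_dvd hd3 htb₁)
    push_cast at h; exact h
  have C2 : (t₂ : ZMod u₁) * (tb₂ : ZMod u₁) = 1 := by
    have h := (ZMod.intCast_eq_intCast_iff _ _ u₁).mpr (Int.ModEq.of_dvd hd3 htb₂)
    push_cast at h; exact h
  have D1 : (t₁ : ZMod u₂) * (tb₁ : ZMod u₂) = 1 := by
    have h := (ZMod.intCast_eq_intCast_iff _ _ u₂).mpr (Int.ModEq.of_dvd hd4 htb₁)
    push_cast at h; exact h
  have D2 : (t₂ : ZMod u₂) * (tb₂ : ZMod u₂) = 1 := by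
    have h := (ZMod.intCast_eq_intCast_iff _ _ u₂).mpr (Int.ModEq.of_dvd hd4 htb₂)
    push_cast at h; exact h
  have T1 : (t₁ : ZMod t₁) = 0 := ZMod.natCast_self t₁
  have T2 : (t₂ : ZMod t₂) = 0 := ZMod.natCast_self t₂
  have U1 : (u₁ : ZMod u₁) = 0 := ZMod.natCast_self u₁
  have U2 : (u₂ : ZMod u₂) = 0 := ZMod.natCast_self u₂
  have cop₁ : Nat.Coprime t₁ u₁ :=
    Nat.Coprime.coprime_dvd_right (dvd_mul_right u₁ u₂) (Nat.Coprime.coprime_dvd_left (dvd_mul_right t₁ t₂) hcop)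
  have cop₂ : Nat.Coprime t₂ u₂ :=
    Nat.Coprime.coprime_dvd_right (dvd_mul_left u₂ u₁) (Nat.Coprime.coprime_dvd_left (dvd_mul_left t₂ t₁) hcop)
  have iu1 : IsUnit (((u₁:ℤ)) : ZMod t₁) := IsUnit.of_mul_eq_one ((ub₁ : ℤ) : ZMod t₁) (by push_cast; linear_combination A1)
  have iu2 : IsUnit ((ub₁*(u₂:ℤ) : ℤ) : ZMod t₁) := IsUnit.of_mul_eq_one (((u₁:ℤ)*ub₂ : ℤ) : ZMod t₁)
    (by push_cast; linear_combination ((u₂ : ZMod t₁) * (ub₂ : ZMod t₁)) * A1 + A2)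
  have iu3 : IsUnit (((u₁:ℤ)*ub₂ : ℤ) : ZMod t₂) := IsUnit.of_mul_eq_one ((ub₁*(u₂:ℤ) : ℤ) : ZMod t₂)
    (by push_cast; linear_combination ((u₂ : ZMod t₂) * (ub₂ : ZMod t₂)) * B1 + B2)
  have iu4 : IsUnit (((u₂:ℤ)) : ZMod t₂) := IsUnit.of_mul_eq_one ((ub₂ : ℤ) : ZMod t₂) (by push_cast; linear_combination B2)
  have ju1 : IsUnit (((t₁:ℤ)) : ZMod u₁) := IsUnit.of_mul_eq_one ((tb₁ : ℤ) : ZMod u₁) (by push_cast; linear_combination C1)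
  have ju2 : IsUnit ((tb₁*(t₂:ℤ) : ℤ) : ZMod u₁) := IsUnit.of_mul_eq_one (((t₁:ℤ)*tb₂ : ℤ) : ZMod u₁)
    (by push_cast; linear_combination ((t₂ : ZMod u₁) * (tb₂ : ZMod u₁)) * C1 + C2)
  have ju3 : IsUnit (((t₁:ℤ)*tb₂ : ℤ) : ZMod u₂) := IsUnit.of_mul_eq_one ((tb₁*(t₂:ℤ) : ℤ) : ZMod u₂)
    (by push_cast; linear_combination ((t₂ : ZMod u₂) * (tb₂ : ZMod u₂)) * D1 + D2)
  have ju4 : IsUnit (((t₂:ℤ)) : ZMod u₂) := IsUnit.of_mul_eq_one ((tb₂ : ℤ) : ZMod u₂) (by push_cast; linear_combination D2)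
  have sh1 : Shat S a b d x₁ x₂ y₁ y₂ z₁ z₂ (t₁*u₁) (t₂*u₂)
      = (1 / (((t₁*u₁ : ℕ) : ℂ) ^ 3 * ((t₂*u₂ : ℕ) : ℂ) ^ 3)) * (∑ n₁ ∈ Finset.range (t₁*u₁), ∑ m₁ ∈ Finset.range (t₁*u₁), ∑ l₁ ∈ Finset.range (t₁*u₁), ∑ n₂ ∈ Finset.range (t₂*u₂), ∑ m₂ ∈ Finset.range (t₂*u₂), ∑ l₂ ∈ Finset.range (t₂*u₂), S (a*((m₁:ℤ))*d) (b*((n₂:ℤ))*((l₂:ℤ))) (((n₁:ℤ))*((l₁:ℤ))) (((m₂:ℤ))*d) (t₁*u₁) (t₂*u₂) * eZ (t₁*u₁) (((n₁:ℤ))*x₁+((m₁:ℤ))*y₁+((l₁:ℤ))*z₁) * eZ (t₂*u₂) (((n₂:ℤ))*x₂+((m₂:ℤ))*y₂+((l₂:ℤ))*z₂)) := by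
    simp only [Shat, eZ]
  have sh2 : Shat S a b d (tb₁ * x₁) ((t₂:ℤ) * tb₁ * x₂) ((t₁:ℤ) * tb₂ * y₁) (tb₂ * y₂) (tb₁ * z₁) (tb₂ * z₂) u₁ u₂
      = (1 / (((u₁ : ℕ) : ℂ) ^ 3 * ((u₂ : ℕ) : ℂ) ^ 3)) * (∑ n₁ ∈ Finset.range u₁, ∑ m₁ ∈ Finset.range u₁, ∑ l₁ ∈ Finset.range u₁, ∑ n₂ ∈ Finset.range u₂, ∑ m₂ ∈ Finset.range u₂, ∑ l₂ ∈ Finset.range u₂, S (a*((m₁:ℤ))*d) (b*((n₂:ℤ))*((l₂:ℤ))) (((n₁:ℤ))*((l₁:ℤ))) (((m₂:ℤ))*d) u₁ u₂ * eZ u₁ (((n₁:ℤ))*(tb₁*x₁)+((m₁:ℤ))*((t₁:ℤ)*tb₂*y₁)+((l₁:ℤ))*(tb₁*z₁)) * eZ u₂ (((n₂:ℤ))*((t₂:ℤ)*tb₁*x₂)+((m₂:ℤ))*(tb₂*y₂)+((l₂:ℤ))*(tb₂*z₂))) := by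
    simp only [Shat, eZ]
  have sh3 : Shat S a b d (ub₁ * x₁) ((u₂:ℤ) * ub₁ * x₂) ((u₁:ℤ) * ub₂ * y₁) (ub₂ * y₂) (ub₁ * z₁) (ub₂ * z₂) t₁ t₂
      = (1 / (((t₁ : ℕ) : ℂ) ^ 3 * ((t₂ : ℕ) : ℂ) ^ 3)) * (∑ n₁ ∈ Finset.range t₁, ∑ m₁ ∈ Finset.range t₁, ∑ l₁ ∈ Finset.range t₁, ∑ n₂ ∈ Finset.range t₂, ∑ m₂ ∈ Finset.range t₂, ∑ l₂ ∈ Finset.range t₂, S (a*((m₁:ℤ))*d) (b*((n₂:ℤ))*((l₂:ℤ))) (((n₁:ℤ))*((l₁:ℤ))) (((m₂:ℤ))*d) t₁ t₂ * eZ t₁ (((n₁:ℤ))*(ub₁*x₁)+((m₁:ℤ))*((u₁:ℤ)*ub₂*y₁)+((l₁:ℤ))*(ub₁*z₁)) * eZ t₂ (((n₂:ℤ))*((u₂:ℤ)*ub₁*x₂)+((m₂:ℤ))*(ub₂*y₂)+((l₂:ℤ))*(ub₂*z₂))) := by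
    simp only [Shat, eZ]
  have e1 := six_split t₁ u₁ t₂ u₂ ht₁ hu₁ ht₂ hu₂ cop₁ cop₂ (fun n₁ m₁ l₁ n₂ m₂ l₂ => S (a*m₁*d) (b*n₂*l₂) (n₁*l₁) (m₂*d) (t₁*u₁) (t₂*u₂) * eZ (t₁*u₁) (n₁*x₁+m₁*y₁+l₁*z₁) * eZ (t₂*u₂) (n₂*x₂+m₂*y₂+l₂*z₂))
    (per6_summand S hper a b d x₁ y₁ z₁ x₂ y₂ z₂ (t₁*u₁) (t₂*u₂))
  have rt := six_reindex t₁ t₂ ht₁ ht₂ ((u₁:ℤ)) (ub₁*(u₂:ℤ)) ((u₁:ℤ)) ((u₁:ℤ)*ub₂) ((u₂:ℤ)) ((u₂:ℤ))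
    iu1 iu2 iu1 iu3 iu4 iu4 (fun n₁ m₁ l₁ n₂ m₂ l₂ => S (a*m₁*d) (b*n₂*l₂) (n₁*l₁) (m₂*d) t₁ t₂ * eZ t₁ (n₁*(ub₁*x₁)+m₁*((u₁:ℤ)*ub₂*y₁)+l₁*(ub₁*z₁)) * eZ t₂ (n₂*((u₂:ℤ)*ub₁*x₂)+m₂*(ub₂*y₂)+l₂*(ub₂*z₂)))
    (per6_summand S hper a b d (ub₁*x₁) ((u₁:ℤ)*ub₂*y₁) (ub₁*z₁) ((u₂:ℤ)*ub₁*x₂) (ub₂*y₂) (ub₂*z₂) t₁ t₂)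
  have ru := six_reindex u₁ u₂ hu₁ hu₂ ((t₁:ℤ)) (tb₁*(t₂:ℤ)) ((t₁:ℤ)) ((t₁:ℤ)*tb₂) ((t₂:ℤ)) ((t₂:ℤ))
    ju1 ju2 ju1 ju3 ju4 ju4 (fun n₁ m₁ l₁ n₂ m₂ l₂ => S (a*m₁*d) (b*n₂*l₂) (n₁*l₁) (m₂*d) u₁ u₂ * eZ u₁ (n₁*(tb₁*x₁)+m₁*((t₁:ℤ)*tb₂*y₁)+l₁*(tb₁*z₁)) * eZ u₂ (n₂*((t₂:ℤ)*tb₁*x₂)+m₂*(tb₂*y₂)+l₂*(tb₂*z₂)))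
    (per6_summand S hper a b d (tb₁*x₁) ((t₁:ℤ)*tb₂*y₁) (tb₁*z₁) ((t₂:ℤ)*tb₁*x₂) (tb₂*y₂) (tb₂*z₂) u₁ u₂)
  have e3 := interleave (Finset.range t₁) (Finset.range u₁) (Finset.range t₁) (Finset.range u₁)
    (Finset.range t₁) (Finset.range u₁) (Finset.range t₂) (Finset.range u₂)
    (Finset.range t₂) (Finset.range u₂) (Finset.range t₂) (Finset.range u₂)
    (fun pn pm pl qn qm ql => S (a*(ub₁*(u₂:ℤ)*(pm:ℤ))*d) (b*((u₁:ℤ)*ub₂*(qn:ℤ))*((u₂:ℤ)*(ql:ℤ))) (((u₁:ℤ)*(pn:ℤ))*((u₁:ℤ)*(pl:ℤ))) (((u₂:ℤ)*(qm:ℤ))*d) t₁ t₂ * eZ t₁ (((u₁:ℤ)*(pn:ℤ))*(ub₁*x₁)+(ub₁*(u₂:ℤ)*(pm:ℤ))*((u₁:ℤ)*ub₂*y₁)+((u₁:ℤ)*(pl:ℤ))*(ub₁*z₁)) * eZ t₂ (((u₁:ℤ)*ub₂*(qn:ℤ))*((u₂:ℤ)*ub₁*x₂)+((u₂:ℤ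)*(qm:ℤ))*(ub₂*y₂)+((u₂:ℤ)*(ql:ℤ))*(ub₂*z₂)))
    (fun Pn Pm Pl Qn Qm Ql => S (a*(tb₁*(t₂:ℤ)*(Pm:ℤ))*d) (b*((t₁:ℤ)*tb₂*(Qn:ℤ))*((t₂:ℤ)*(Ql:ℤ))) (((t₁:ℤ)*(Pn:ℤ))*((t₁:ℤ)*(Pl:ℤ))) (((t₂:ℤ)*(Qm:ℤ))*d) u₁ u₂ * eZ u₁ (((t₁:ℤ)*(Pn:ℤ))*(tb₁*x₁)+(tb₁*(t₂:ℤ)*(Pm:ℤ))*((t₁:ℤ)*tb₂*y₁)+((t₁:ℤ)*(Pl:ℤ))*(tb₁*z₁)) * eZ u₂ (((t₁:ℤ)*tb₂*(Qn:ℤ))*((t₂:ℤ)*tb₁*x₂)+((t₂:ℤ)*(Qm:ℤ))*(tb₂*y₂)+((t₂:ℤ)*(Ql:ℤ))*(tb₂*z₂)))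
  have key : ∀ pn Pn pm Pm pl Pl qn Qn qm Qm ql Ql : ℕ,
      (S (a*(((u₁:ℤ)*(pm:ℤ) + (t₁:ℤ)*(Pm:ℤ)))*d) (b*(((u₂:ℤ)*(qn:ℤ) + (t₂:ℤ)*(Qn:ℤ)))*(((u₂:ℤ)*(ql:ℤ) + (t₂:ℤ)*(Ql:ℤ)))) ((((u₁:ℤ)*(pn:ℤ) + (t₁:ℤ)*(Pn:ℤ)))*(((u₁:ℤ)*(pl:ℤ) + (t₁:ℤ)*(Pl:ℤ)))) ((((u₂:ℤ)*(qm:ℤ) + (t₂:ℤ)*(Qm:ℤ)))*d) (t₁*u₁) (t₂*u₂) * eZ (t₁*u₁) ((((u₁:ℤ)*(pn:ℤ) + (t₁:ℤ)*(Pn:ℤ)))*x₁+(((u₁:ℤ)*(pm:ℤ) + (t₁:ℤ)*(Pm:ℤ)))*y₁+(((u₁:ℤ)*(pl:ℤ) + (t₁:ℤ)*(Pl:ℤ)))*z₁) * eZ (t₂*u₂) ((((u₂:ℤ)*(qn:ℤ) + (t₂:ℤ)*(Qn:ℤ)))*x₂+(((u₂:ℤ)*(qm:ℤ) + (t₂:ℤ)*(Qm:ℤ)))*y₂+(((u₂:ℤ)*(ql:ℤ)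 + (t₂:ℤ)*(Ql:ℤ)))*z₂))
      = (S (a*(ub₁*(u₂:ℤ)*(pm:ℤ))*d) (b*((u₁:ℤ)*ub₂*(qn:ℤ))*((u₂:ℤ)*(ql:ℤ))) (((u₁:ℤ)*(pn:ℤ))*((u₁:ℤ)*(pl:ℤ))) (((u₂:ℤ)*(qm:ℤ))*d) t₁ t₂ * eZ t₁ (((u₁:ℤ)*(pn:ℤ))*(ub₁*x₁)+(ub₁*(u₂:ℤ)*(pm:ℤ))*((u₁:ℤ)*ub₂*y₁)+((u₁:ℤ)*(pl:ℤ))*(ub₁*z₁)) * eZ t₂ (((u₁:ℤ)*ub₂*(qn:ℤ))*((u₂:ℤ)*ub₁*x₂)+((u₂:ℤ)*(qm:ℤ))*(ub₂*y₂)+((u₂:ℤ)*(ql:ℤ))*(ub₂*z₂))) * (S (a*(tb₁*(t₂:ℤ)*(Pm:ℤ))*d) (b*((t₁:ℤ)*tb₂*(Qn:ℤ))*((t₂:ℤ)*(Ql:ℤ))) (((t₁:ℤ)*(Pn:ℤ))*((t₁:ℤ)*(Pl:ℤ))) (((t₂:ℤ)*(Qm:ℤ))*d) u₁ u₂ * eZ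 u₁ (((t₁:ℤ)*(Pn:ℤ))*(tb₁*x₁)+(tb₁*(t₂:ℤ)*(Pm:ℤ))*((t₁:ℤ)*tb₂*y₁)+((t₁:ℤ)*(Pl:ℤ))*(tb₁*z₁)) * eZ u₂ (((t₁:ℤ)*tb₂*(Qn:ℤ))*((t₂:ℤ)*tb₁*x₂)+((t₂:ℤ)*(Qm:ℤ))*(tb₂*y₂)+((t₂:ℤ)*(Ql:ℤ))*(tb₂*z₂))) := by
    intro pn Pn pm Pm pl Pl qn Qn qm Qm ql Ql
    have gA1 : ub₁^2*(u₂:ℤ)*(a*(((u₁:ℤ)*(pm:ℤ) + (t₁:ℤ)*(Pm:ℤ)))*d) ≡ a*(ub₁*(u₂:ℤ)*(pm:ℤ))*d [ZMOD ((t₁:ℕ):ℤ)] := by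
      rw [← ZMod.intCast_eq_intCast_iff]; push_cast
      linear_combination ((a : ZMod t₁)*(u₂ : ZMod t₁)*(ub₁ : ZMod t₁)*(pm : ZMod t₁)*(d : ZMod t₁)) * A1 + ((ub₁ : ZMod t₁)^2*(u₂ : ZMod t₁)*(a : ZMod t₁)*(Pm : ZMod t₁)*(d : ZMod t₁)) * T1
    have gA3 : (((u₁:ℤ)*(pn:ℤ) + (t₁:ℤ)*(Pn:ℤ)))*(((u₁:ℤ)*(pl:ℤ) + (t₁:ℤ)*(Pl:ℤ))) ≡ ((u₁:ℤ)*(pn:ℤ))*((u₁:ℤ)*(pl:ℤ)) [ZMOD ((t₁:ℕ):ℤ)] := by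
      rw [← ZMod.intCast_eq_intCast_iff]; push_cast
      linear_combination ((u₁ : ZMod t₁)*(pn : ZMod t₁)*(Pl : ZMod t₁) + (u₁ : ZMod t₁)*(Pn : ZMod t₁)*(pl : ZMod t₁) + (t₁ : ZMod t₁)*(Pn : ZMod t₁)*(Pl : ZMod t₁)) * T1
    have gA2 : ub₂^2*(u₁:ℤ)*(b*(((u₂:ℤ)*(qn:ℤ) + (t₂:ℤ)*(Qn:ℤ)))*(((u₂:ℤ)*(ql:ℤ) + (t₂:ℤ)*(Ql:ℤ)))) ≡ b*((u₁:ℤ)*ub₂*(qn:ℤ))*((u₂:ℤ)*(ql:ℤ)) [ZMOD ((t₂:ℕ):ℤ)] := by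
      rw [← ZMod.intCast_eq_intCast_iff]; push_cast
      linear_combination ((b : ZMod t₂)*(u₁ : ZMod t₂)*(u₂ : ZMod t₂)*(ub₂ : ZMod t₂)*(qn : ZMod t₂)*(ql : ZMod t₂)) * B2 + ((ub₂ : ZMod t₂)^2*(u₁ : ZMod t₂)*(b : ZMod t₂)*((u₂ : ZMod t₂)*(qn : ZMod t₂)*(Ql : ZMod t₂) + (u₂ : ZMod t₂)*(Qn : ZMod t₂)*(ql : ZMod t₂) + (t₂ : ZMod t₂)*(Qn : ZMod t₂)*(Ql : ZMod t₂))) * T2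
    have gA4 : (((u₂:ℤ)*(qm:ℤ) + (t₂:ℤ)*(Qm:ℤ)))*d ≡ ((u₂:ℤ)*(qm:ℤ))*d [ZMOD ((t₂:ℕ):ℤ)] := by
      rw [← ZMod.intCast_eq_intCast_iff]; push_cast
      linear_combination ((Qm : ZMod t₂)*(d : ZMod t₂)) * T2
    have gB1 : tb₁^2*(t₂:ℤ)*(a*(((u₁:ℤ)*(pm:ℤ) + (t₁:ℤ)*(Pm:ℤ)))*d) ≡ a*(tb₁*(t₂:ℤ)*(Pm:ℤ))*d [ZMOD ((u₁:ℕ):ℤ)] := by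
      rw [← ZMod.intCast_eq_intCast_iff]; push_cast
      linear_combination ((tb₁ : ZMod u₁)^2*(t₂ : ZMod u₁)*(a : ZMod u₁)*(pm : ZMod u₁)*(d : ZMod u₁)) * U1 + ((a : ZMod u₁)*(t₂ : ZMod u₁)*(tb₁ : ZMod u₁)*(Pm : ZMod u₁)*(d : ZMod u₁)) * C1
    have gB3 : (((u₁:ℤ)*(pn:ℤ) + (t₁:ℤ)*(Pn:ℤ)))*(((u₁:ℤ)*(pl:ℤ) + (t₁:ℤ)*(Pl:ℤ))) ≡ ((t₁:ℤ)*(Pn:ℤ))*((t₁:ℤ)*(Pl:ℤ)) [ZMOD ((u₁:ℕ):ℤ)] := by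
      rw [← ZMod.intCast_eq_intCast_iff]; push_cast
      linear_combination ((u₁ : ZMod u₁)*(pn : ZMod u₁)*(pl : ZMod u₁) + (t₁ : ZMod u₁)*(pn : ZMod u₁)*(Pl : ZMod u₁) + (t₁ : ZMod u₁)*(Pn : ZMod u₁)*(pl : ZMod u₁)) * U1
    have gB2 : tb₂^2*(t₁:ℤ)*(b*(((u₂:ℤ)*(qn:ℤ) + (t₂:ℤ)*(Qn:ℤ)))*(((u₂:ℤ)*(ql:ℤ) + (t₂:ℤ)*(Ql:ℤ)))) ≡ b*((t₁:ℤ)*tb₂*(Qn:ℤ))*((t₂:ℤ)*(Ql:ℤ)) [ZMOD ((u₂:ℕ):ℤ)] := by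
      rw [← ZMod.intCast_eq_intCast_iff]; push_cast
      linear_combination ((b : ZMod u₂)*(t₁ : ZMod u₂)*(t₂ : ZMod u₂)*(tb₂ : ZMod u₂)*(Qn : ZMod u₂)*(Ql : ZMod u₂)) * D2 + ((tb₂ : ZMod u₂)^2*(t₁ : ZMod u₂)*(b : ZMod u₂)*((u₂ : ZMod u₂)*(qn : ZMod u₂)*(ql : ZMod u₂) + (t₂ : ZMod u₂)*(qn : ZMod u₂)*(Ql : ZMod u₂) + (t₂ : ZMod u₂)*(Qn : ZMod u₂)*(ql : ZMod u₂))) * U2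
    have gB4 : (((u₂:ℤ)*(qm:ℤ) + (t₂:ℤ)*(Qm:ℤ)))*d ≡ ((t₂:ℤ)*(Qm:ℤ))*d [ZMOD ((u₂:ℕ):ℤ)] := by
      rw [← ZMod.intCast_eq_intCast_iff]; push_cast
      linear_combination ((qm : ZMod u₂)*(d : ZMod u₂)) * U2
    have E1 : ((pn:ℤ)*x₁+(pm:ℤ)*y₁+(pl:ℤ)*z₁) ≡ (((u₁:ℤ)*(pn:ℤ))*(ub₁*x₁)+(ub₁*(u₂:ℤ)*(pm:ℤ))*((u₁:ℤ)*ub₂*y₁)+((u₁:ℤ)*(pl:ℤ))*(ub₁*z₁)) [ZMOD ((t₁:ℕ):ℤ)] := by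
      rw [← ZMod.intCast_eq_intCast_iff]; push_cast
      linear_combination (-((pn : ZMod t₁)*(x₁ : ZMod t₁)) - (pl : ZMod t₁)*(z₁ : ZMod t₁) - (pm : ZMod t₁)*(y₁ : ZMod t₁)*(u₂ : ZMod t₁)*(ub₂ : ZMod t₁)) * A1 + (-((pm : ZMod t₁)*(y₁ : ZMod t₁))) * A2
    have E2 : ((qn:ℤ)*x₂+(qm:ℤ)*y₂+(ql:ℤ)*z₂) ≡ (((u₁:ℤ)*ub₂*(qn:ℤ))*((u₂:ℤ)*ub₁*x₂)+((u₂:ℤ)*(qm:ℤ))*(ub₂*y₂)+((u₂:ℤ)*(ql:ℤ))*(ub₂*z₂)) [ZMOD ((t₂:ℕ):ℤ)] := by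
      rw [← ZMod.intCast_eq_intCast_iff]; push_cast
      linear_combination (-((qn : ZMod t₂)*(x₂ : ZMod t₂)*(u₂ : ZMod t₂)*(ub₂ : ZMod t₂))) * B1 + (-((qn : ZMod t₂)*(x₂ : ZMod t₂)) - (qm : ZMod t₂)*(y₂ : ZMod t₂) - (ql : ZMod t₂)*(z₂ : ZMod t₂)) * B2
    have E3 : ((Pn:ℤ)*x₁+(Pm:ℤ)*y₁+(Pl:ℤ)*z₁) ≡ (((t₁:ℤ)*(Pn:ℤ))*(tb₁*x₁)+(tb₁*(t₂:ℤ)*(Pm:ℤ))*((t₁:ℤ)*tb₂*y₁)+((t₁:ℤ)*(Pl:ℤ))*(tb₁*z₁)) [ZMOD ((u₁:ℕ):ℤ)] := by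
      rw [← ZMod.intCast_eq_intCast_iff]; push_cast
      linear_combination (-((Pn : ZMod u₁)*(x₁ : ZMod u₁)) - (Pl : ZMod u₁)*(z₁ : ZMod u₁) - (Pm : ZMod u₁)*(y₁ : ZMod u₁)*(t₂ : ZMod u₁)*(tb₂ : ZMod u₁)) * C1 + (-((Pm : ZMod u₁)*(y₁ : ZMod u₁))) * C2
    have E4 : ((Qn:ℤ)*x₂+(Qm:ℤ)*y₂+(Ql:ℤ)*z₂) ≡ (((t₁:ℤ)*tb₂*(Qn:ℤ))*((t₂:ℤ)*tb₁*x₂)+((t₂:ℤ)*(Qm:ℤ))*(tb₂*y₂)+((t₂:ℤ)*(Ql:ℤ))*(tb₂*z₂)) [ZMOD ((u₂:ℕ):ℤ)] := by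
      rw [← ZMod.intCast_eq_intCast_iff]; push_cast
      linear_combination (-((Qn : ZMod u₂)*(x₂ : ZMod u₂)*(t₂ : ZMod u₂)*(tb₂ : ZMod u₂))) * D1 + (-((Qn : ZMod u₂)*(x₂ : ZMod u₂)) - (Qm : ZMod u₂)*(y₂ : ZMod u₂) - (Ql : ZMod u₂)*(z₂ : ZMod u₂)) * D2
    have s1 : ((((u₁:ℤ)*(pn:ℤ) + (t₁:ℤ)*(Pn:ℤ)))*x₁+(((u₁:ℤ)*(pm:ℤ) + (t₁:ℤ)*(Pm:ℤ)))*y₁+(((u₁:ℤ)*(pl:ℤ) + (t₁:ℤ)*(Pl:ℤ)))*z₁)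
        = (u₁:ℤ)*((pn:ℤ)*x₁+(pm:ℤ)*y₁+(pl:ℤ)*z₁) + (t₁:ℤ)*((Pn:ℤ)*x₁+(Pm:ℤ)*y₁+(Pl:ℤ)*z₁) := by ring
    have s2 : ((((u₂:ℤ)*(qn:ℤ) + (t₂:ℤ)*(Qn:ℤ)))*x₂+(((u₂:ℤ)*(qm:ℤ) + (t₂:ℤ)*(Qm:ℤ)))*y₂+(((u₂:ℤ)*(ql:ℤ) + (t₂:ℤ)*(Ql:ℤ)))*z₂)
        = (u₂:ℤ)*((qn:ℤ)*x₂+(qm:ℤ)*y₂+(ql:ℤ)*z₂) + (t₂:ℤ)*((Qn:ℤ)*x₂+(Qm:ℤ)*y₂+(Ql:ℤ)*z₂) := by ring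
    rw [hmult (a*(((u₁:ℤ)*(pm:ℤ) + (t₁:ℤ)*(Pm:ℤ)))*d) (b*(((u₂:ℤ)*(qn:ℤ) + (t₂:ℤ)*(Qn:ℤ)))*(((u₂:ℤ)*(ql:ℤ) + (t₂:ℤ)*(Ql:ℤ)))) ((((u₁:ℤ)*(pn:ℤ) + (t₁:ℤ)*(Pn:ℤ)))*(((u₁:ℤ)*(pl:ℤ) + (t₁:ℤ)*(Pl:ℤ)))) ((((u₂:ℤ)*(qm:ℤ) + (t₂:ℤ)*(Qm:ℤ)))*d)
        t₁ t₂ u₁ u₂ tb₁ tb₂ ub₁ ub₂ hcop htb₁ htb₂ hub₁ hub₂]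
    rw [s1, eZ_split t₁ u₁ ht₁.ne' hu₁.ne', s2, eZ_split t₂ u₂ ht₂.ne' hu₂.ne']
    rw [hper _ _ _ _ _ _ _ _ t₁ t₂ gA1 gA3 gA2 gA4, hper _ _ _ _ _ _ _ _ u₁ u₂ gB1 gB3 gB2 gB4]
    rw [eZ_congr E1, eZ_congr E2, eZ_congr E3, eZ_congr E4]
    ring
  have e2 : (∑ pn ∈ Finset.range t₁, ∑ Pn ∈ Finset.range u₁, ∑ pm ∈ Finset.range t₁, ∑ Pm ∈ Finset.range u₁, ∑ pl ∈ Finset.range t₁, ∑ Pl ∈ Finset.range u₁, ∑ qn ∈ Finset.range t₂, ∑ Qn ∈ Finset.range u₂, ∑ qm ∈ Finset.range t₂, ∑ Qm ∈ Finset.range u₂, ∑ ql ∈ Finset.range t₂, ∑ Ql ∈ Finset.range u₂, S (a*(((u₁:ℤ)*(pm:ℤ) + (t₁:ℤ)*(Pm:ℤ)))*d) (b*(((u₂:ℤ)*(qn:ℤ) + (t₂:ℤ)*(Qn:ℤ)))*(((u₂:ℤ)*(ql:ℤ) + (t₂:ℤ)*(Ql:ℤ)))) ((((u₁:ℤ)*(pn:ℤ)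 + (t₁:ℤ)*(Pn:ℤ)))*(((u₁:ℤ)*(pl:ℤ) + (t₁:ℤ)*(Pl:ℤ)))) ((((u₂:ℤ)*(qm:ℤ) + (t₂:ℤ)*(Qm:ℤ)))*d) (t₁*u₁) (t₂*u₂) * eZ (t₁*u₁) ((((u₁:ℤ)*(pn:ℤ) + (t₁:ℤ)*(Pn:ℤ)))*x₁+(((u₁:ℤ)*(pm:ℤ) + (t₁:ℤ)*(Pm:ℤ)))*y₁+(((u₁:ℤ)*(pl:ℤ) + (t₁:ℤ)*(Pl:ℤ)))*z₁) * eZ (t₂*u₂) ((((u₂:ℤ)*(qn:ℤ) + (t₂:ℤ)*(Qn:ℤ)))*x₂+(((u₂:ℤ)*(qm:ℤ) + (t₂:ℤ)*(Qm:ℤ)))*y₂+(((u₂:ℤ)*(ql:ℤ) + (t₂:ℤ)*(Ql:ℤ)))*z₂))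
      = (∑ pn ∈ Finset.range t₁, ∑ Pn ∈ Finset.range u₁, ∑ pm ∈ Finset.range t₁, ∑ Pm ∈ Finset.range u₁, ∑ pl ∈ Finset.range t₁, ∑ Pl ∈ Finset.range u₁, ∑ qn ∈ Finset.range t₂, ∑ Qn ∈ Finset.range u₂, ∑ qm ∈ Finset.range t₂, ∑ Qm ∈ Finset.range u₂, ∑ ql ∈ Finset.range t₂, ∑ Ql ∈ Finset.range u₂, (S (a*(ub₁*(u₂:ℤ)*(pm:ℤ))*d) (b*((u₁:ℤ)*ub₂*(qn:ℤ))*((u₂:ℤ)*(ql:ℤ))) (((u₁:ℤ)*(pn:ℤ))*((u₁:ℤ)*(pl:ℤ))) (((u₂:ℤ)*(qm:ℤ))*d) t₁ t₂ * eZ t₁ (((u₁:ℤ)*(pn:ℤ))*(ub₁*x₁)+(ub₁*(u₂:ℤ)*(pm:ℤ))*((u₁:ℤ)*ub₂*y₁)+((u₁:ℤ)*(pl:ℤ))*(ub₁*z₁)) * eZ t₂ (((u₁:ℤ)*ub₂*(qn:ℤ))*((u₂:ℤ)*ub₁*x₂)+((u₂:ℤ)*(qm:ℤ))*(ub₂*y₂)+((u₂:ℤ)*(ql:ℤ))*(ub₂*z₂)))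 * (S (a*(tb₁*(t₂:ℤ)*(Pm:ℤ))*d) (b*((t₁:ℤ)*tb₂*(Qn:ℤ))*((t₂:ℤ)*(Ql:ℤ))) (((t₁:ℤ)*(Pn:ℤ))*((t₁:ℤ)*(Pl:ℤ))) (((t₂:ℤ)*(Qm:ℤ))*d) u₁ u₂ * eZ u₁ (((t₁:ℤ)*(Pn:ℤ))*(tb₁*x₁)+(tb₁*(t₂:ℤ)*(Pm:ℤ))*((t₁:ℤ)*tb₂*y₁)+((t₁:ℤ)*(Pl:ℤ))*(tb₁*z₁)) * eZ u₂ (((t₁:ℤ)*tb₂*(Qn:ℤ))*((t₂:ℤ)*tb₁*x₂)+((t₂:ℤ)*(Qm:ℤ))*(tb₂*y₂)+((t₂:ℤ)*(Ql:ℤ))*(tb₂*z₂)))) := by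
    refine Finset.sum_congr rfl fun pn _ => Finset.sum_congr rfl fun Pn _ => Finset.sum_congr rfl fun pm _ => Finset.sum_congr rfl fun Pm _ => Finset.sum_congr rfl fun pl _ => Finset.sum_congr rfl fun Pl _ => Finset.sum_congr rfl fun qn _ => Finset.sum_congr rfl fun Qn _ => Finset.sum_congr rfl fun qm _ => Finset.sum_congr rfl fun Qm _ => Finset.sum_congr rfl fun ql _ => Finset.sum_congr rfl fun Ql _ => ?_
    exact key pn Pn pm Pm pl Pl qn Qn qm Qm ql Ql
  have ecst : (1 : ℂ) / (((t₁*u₁ : ℕ) : ℂ) ^ 3 * ((t₂*u₂ : ℕ) : ℂ) ^ 3)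
      = (1 / (((u₁:ℕ) : ℂ) ^ 3 * ((u₂:ℕ) : ℂ) ^ 3)) * (1 / (((t₁:ℕ) : ℂ) ^ 3 * ((t₂:ℕ) : ℂ) ^ 3)) := by
    push_cast; ring
  rw [sh1, sh2, sh3]
  simp (config := { maxSteps := 10000000 }) only [e1]
  simp (config := { maxSteps := 10000000 }) only [e2]
  simp (config := { maxSteps := 10000000 }) only [e3]
  simp (config := { maxSteps := 10000000 }) only [rt]
  simp (config := { maxSteps := 10000000 }) only [ru]
  rw [ecst]
  ring
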